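/- Let F_q be a finite field with q elements. The number of solutions in F_q⁸ of the system x₁·x₁' = 1 + x₂, x₂·x₂' = 1 + x₁·x₃, x₃·x₃' = 1 + x₂·x₄, x₄·x₄' = 1 + x₃ equals q⁴ + q² + 1. -/

import Mathlib

open Finset

set_option linter.unusedSectionVars false

section aux
variable {F : Type*} [Field F] [Fintype F] [DecidableEq F]

private def hh (q : ℕ) (b c : F) : ℕ := if b = 0 then (if c = 0 then q else 0) else 1

private lemma sum_solve (b c : F) :
    ∑ y : F, (if b * y = c then (1:ℕ) else 0) = hh (Fintype.card F) b c := by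
  unfold hh
  by_cases hb : b = 0
  · subst hb
    by_cases hc : c = 0 <;> simp [hc, eq_comm]
  · have key : ∀ y : F, (b * y = c) ↔ (y = b⁻¹ * c) := by
      intro y
      rw [eq_inv_mul_iff_mul_eq₀ hb]
    simp only [key, hb, if_false]
    simp [Finset.sum_ite_eq']

private lemma sum_hh (q : ℕ) (c : F) :
    ∑ e : F, hh q e c = (Fintype.card F - 1) + (if c = 0 then q else 0) := by
  rw [← Finset.add_sum_erase _ _ (mem_univ (0:F))]
  have h1 : ∀ e ∈ univ.erase (0:F), hh q e c = 1 := by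
    intro e he
    simp only [mem_erase] at he
    simp [hh, he.1]
  rw [Finset.sum_congr rfl h1, Finset.sum_const, smul_eq_mul, mul_one,
    Finset.card_erase_of_mem (mem_univ _), Finset.card_univ]
  simp [hh, add_comm]

private lemma comp_bij {d : F} (hd : d ≠ 0) (f : F → ℕ) :
    ∑ x : F, f (d * x - 1) = ∑ e : F, f e :=
  Equiv.sum_comp ((Equiv.mulLeft₀ d hd).trans (Equiv.subRight (1:F))) f

/-- the inner double sum, `x2 = a*a' - 1` -/
private def M (q : ℕ) (x2 a : F) : ℕ :=
  ∑ u : F × F, hh q x2 (1 + a*(u.1*u.2 - 1)) * hh q (u.1*u.2 - 1) (1 + x2*u.1)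

private lemma M1 {x2 : F} (hx2 : x2 ≠ 0) (a : F) :
    M (Fintype.card F) x2 a = Fintype.card F ^ 2 + 1 := by
  set q := Fintype.card F with hq
  have h1 : ∀ u : F × F, hh q x2 (1 + a*(u.1*u.2 - 1)) * hh q (u.1*u.2 - 1) (1 + x2*u.1)
      = hh q (u.1*u.2 - 1) (1 + x2*u.1) := by
    intro u; simp [hh, hx2]
  rw [M, Finset.sum_congr rfl (fun u _ => h1 u), Fintype.sum_prod_type]
  rw [← Finset.add_sum_erase _ _ (mem_univ (0:F))]
  have hz : ∑ y : F, hh q ((0:F)*y - 1) (1 + x2*0) = q := by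
    have : ∀ y : F, hh q ((0:F)*y - 1) (1 + x2*0) = 1 := by
      intro y; simp [hh]
    rw [Finset.sum_congr rfl (fun y _ => this y)]
    simp [hq]
  rw [hz]
  have hrest : ∀ d ∈ univ.erase (0:F),
      (∑ y : F, hh q (d*y - 1) (1 + x2*d)) = (q - 1) + (if 1 + x2*d = 0 then q else 0) := by
    intro d hd
    simp only [mem_erase] at hd
    rw [comp_bij hd.1 (fun e => hh q e (1 + x2*d)), sum_hh]
  rw [Finset.sum_congr rfl hrest, Finset.sum_add_distrib, Finset.sum_const, smul_eq_mul,
    Finset.card_erase_of_mem (mem_univ _), Finset.card_univ, ← hq]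
  have hcond : ∀ d : F, (1 + x2*d = 0) ↔ (d = -x2⁻¹) := by
    intro d
    have key0 : 1 + x2*d = x2 * (d - (-x2⁻¹)) := by
      field_simp
      ring
    rw [key0, mul_eq_zero, sub_eq_zero]
    simp [hx2]
  have : ∑ d ∈ univ.erase (0:F), (if 1 + x2*d = 0 then q else 0)
      = ∑ d ∈ univ.erase (0:F), (if d = -x2⁻¹ then q else 0) := by
    apply Finset.sum_congr rfl; intro d _; simp only [hcond]
  rw [this, Finset.sum_ite_eq' (univ.erase (0:F)) (-x2⁻¹) (fun _ => q)]
  rw [if_pos (by simp [inv_ne_zero hx2])]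
  have h1q : 1 ≤ q := Fintype.card_pos
  obtain ⟨r, hr⟩ : ∃ r, q = r + 1 := ⟨q - 1, by omega⟩
  rw [hr]; simp only [Nat.add_sub_cancel]; ring

private lemma countmul (t : F) :
    ∑ u : F × F, (if u.1 * u.2 = t then (1:ℕ) else 0)
      = if t = 0 then 2 * Fintype.card F - 1 else Fintype.card F - 1 := by
  set q := Fintype.card F with hq
  rw [Fintype.sum_prod_type, ← Finset.add_sum_erase _ _ (mem_univ (0:F))]
  have hz : ∑ y : F, (if (0:F) * y = t then (1:ℕ) else 0) = if t = 0 then q else 0 := by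
    by_cases ht : t = 0 <;> simp [ht, eq_comm, hq]
  have hrest : ∀ d ∈ univ.erase (0:F),
      (∑ y : F, if d * y = t then (1:ℕ) else 0) = 1 := by
    intro d hd
    simp only [mem_erase] at hd
    rw [sum_solve]
    simp [hh, sub_eq_zero, hd.1]
  rw [hz, Finset.sum_congr rfl hrest, Finset.sum_const, smul_eq_mul, mul_one,
    Finset.card_erase_of_mem (mem_univ _), Finset.card_univ, ← hq]
  have h1q : 1 ≤ q := Fintype.card_pos
  by_cases ht : t = 0 <;> simp [ht] <;> omega

private lemma M2 {a : F} (ha : a ≠ 0) :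
    M (Fintype.card F) 0 a
      = Fintype.card F * (if a = 1 then 2 * Fintype.card F - 1 else Fintype.card F - 1) := by
  set q := Fintype.card F with hq
  have key : ∀ u : F × F, hh q (0:F) (1 + a*(u.1*u.2 - 1)) * hh q (u.1*u.2 - 1) (1 + (0:F)*u.1)
      = q * (if u.1*u.2 = 1 - a⁻¹ then 1 else 0) := by
    intro u
    have key0 : 1 + a*(u.1*u.2 - 1) = a * (u.1*u.2 - (1 - a⁻¹)) := by
      field_simp
      ring
    have h1 : (1 + a*(u.1*u.2 - 1) = 0) ↔ (u.1*u.2 = 1 - a⁻¹) := by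
      rw [key0, mul_eq_zero, sub_eq_zero]
      simp [ha]
    by_cases hc : u.1*u.2 = 1 - a⁻¹
    · have hne : u.1*u.2 - 1 ≠ 0 := by
        rw [hc]
        simp [sub_sub_cancel_left, inv_ne_zero ha]
      simp [hh, h1, hc, hne, ha, mul_inv_cancel₀ ha]
    · rw [if_neg hc, mul_zero]
      have : ¬ (1 + a*(u.1*u.2 - 1) = 0) := fun h => hc (h1.mp h)
      simp [hh, this]
  rw [M, Finset.sum_congr rfl (fun u _ => key u), ← Finset.mul_sum, countmul]
  congr 1
  have : (1 - a⁻¹ = 0) ↔ (a = 1) := by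
    rw [sub_eq_zero, eq_comm, inv_eq_one]
  by_cases h1 : a = 1 <;> simp [h1, this, hq]

private lemma rowsum (a : F) :
    ∑ a' : F, M (Fintype.card F) (a*a' - 1) a
      = if a = 0 then Fintype.card F * (Fintype.card F^2+1)
        else ((Fintype.card F - 1) * (Fintype.card F^2+1)
          + Fintype.card F * (if a = 1 then 2*Fintype.card F - 1 else Fintype.card F - 1)) := by
  set q := Fintype.card F with hq
  by_cases ha : a = 0
  · subst ha
    have h0 : ∀ a' : F, M q ((0:F)*a' - 1) 0 = q^2+1 := by
      intro a'
      rw [zero_mul, zero_sub]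
      exact M1 (neg_ne_zero.mpr one_ne_zero) 0
    rw [Finset.sum_congr rfl (fun x _ => h0 x), if_pos rfl, Finset.sum_const, smul_eq_mul,
      Finset.card_univ]
  · rw [if_neg ha, comp_bij ha (fun x2 => M q x2 a),
      ← Finset.add_sum_erase _ _ (mem_univ (0:F)), M2 ha]
    have hrest : ∀ x2 ∈ univ.erase (0:F), M q x2 a = q^2+1 := fun x2 hx2 =>
      M1 (mem_erase.mp hx2).1 a
    rw [Finset.sum_congr rfl hrest, Finset.sum_const, smul_eq_mul,
      Finset.card_erase_of_mem (mem_univ _), Finset.card_univ]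
    exact Nat.add_comm _ _

end aux

-- variables as a pair of functions: p.1 i = xᵢ₊₁, p.2 i = x'ᵢ₊₁ (0-indexed)
theorem stmt_3 (F : Type*) [Field F] [Fintype F] :
    Nat.card {p : (Fin 4 → F) × (Fin 4 → F) //
      p.1 0 * p.2 0 = 1 + p.1 1 ∧
      p.1 1 * p.2 1 = 1 + p.1 0 * p.1 2 ∧
      p.1 2 * p.2 2 = 1 + p.1 1 * p.1 3 ∧
      p.1 3 * p.2 3 = 1 + p.1 2} =
    Fintype.card F ^ 4 + Fintype.card F ^ 2 + 1 := by
  classical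
  set q := Fintype.card F with hq
  have e : {p : (Fin 4 → F) × (Fin 4 → F) //
      p.1 0 * p.2 0 = 1 + p.1 1 ∧
      p.1 1 * p.2 1 = 1 + p.1 0 * p.1 2 ∧
      p.1 2 * p.2 2 = 1 + p.1 1 * p.1 3 ∧
      p.1 3 * p.2 3 = 1 + p.1 2} ≃
      {t : (F × F) × (F × F) × (F × F) //
        (t.1.1*t.1.2 - 1)*t.2.2.1 = 1 + t.1.1*(t.2.1.1*t.2.1.2 - 1) ∧
        (t.2.1.1*t.2.1.2 - 1)*t.2.2.2 = 1 + (t.1.1*t.1.2 - 1)*t.2.1.1} := by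
    refine ⟨fun p => ⟨((p.1.1 0, p.1.2 0), ((p.1.1 3, p.1.2 3), (p.1.2 1, p.1.2 2))), ?_⟩,
      fun t => ⟨(![t.1.1.1, t.1.1.1*t.1.1.2 - 1, t.1.2.1.1*t.1.2.1.2 - 1, t.1.2.1.1],
                 ![t.1.1.2, t.1.2.2.1, t.1.2.2.2, t.1.2.1.2]), ?_⟩, ?_, ?_⟩
    · obtain ⟨⟨x, y⟩, h1, h2, h3, h4⟩ := p
      dsimp only
      have e1 : x 0 * y 0 - 1 = x 1 := by rw [h1]; ring
      have e4 : x 3 * y 3 - 1 = x 2 := by rw [h4]; ring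
      rw [e1, e4]
      exact ⟨h2, h3⟩
    · obtain ⟨⟨⟨a, a'⟩, ⟨d, d'⟩, y2, y3⟩, c1, c2⟩ := t
      refine ⟨?_, ?_, ?_, ?_⟩ <;>
        simp only [Matrix.cons_val_zero, Matrix.cons_val_one, Matrix.head_cons,
          Matrix.cons_val_two, Matrix.tail_cons, Matrix.cons_val_three, Matrix.head_fin_const]
      · ring
      · exact c1
      · exact c2
      · ring
    · rintro ⟨⟨x, y⟩, h1, h2, h3, h4⟩
      simp only at h1 h2 h3 h4
      apply Subtype.ext
      refine Prod.ext ?_ ?_ <;> funext i <;> fin_cases i <;> simp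
      · linear_combination h1
      · linear_combination h4
    · rintro ⟨⟨⟨a, a'⟩, ⟨d, d'⟩, y2, y3⟩, c1, c2⟩
      apply Subtype.ext
      simp
  rw [Nat.card_congr e, Nat.card_eq_fintype_card, Fintype.card_subtype, Finset.card_filter,
    Fintype.sum_prod_type]
  have inner : ∀ w : F × F, (∑ z : (F × F) × (F × F),
      if (w.1*w.2 - 1)*z.2.1 = 1 + w.1*(z.1.1*z.1.2 - 1) ∧
         (z.1.1*z.1.2 - 1)*z.2.2 = 1 + (w.1*w.2 - 1)*z.1.1 then (1:ℕ) else 0)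
      = M q (w.1*w.2 - 1) w.1 := by
    intro w
    rw [Fintype.sum_prod_type]
    have step : ∀ u : F × F, (∑ v : F × F,
        if (w.1*w.2 - 1)*v.1 = 1 + w.1*(u.1*u.2 - 1) ∧
           (u.1*u.2 - 1)*v.2 = 1 + (w.1*w.2 - 1)*u.1 then (1:ℕ) else 0)
        = hh q (w.1*w.2 - 1) (1 + w.1*(u.1*u.2 - 1)) * hh q (u.1*u.2 - 1) (1 + (w.1*w.2 - 1)*u.1) := by
      intro u
      rw [Fintype.sum_prod_type]
      have split : ∀ (v1 v2 : F),
          (if (w.1*w.2 - 1)*v1 = 1 + w.1*(u.1*u.2 - 1) ∧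
             (u.1*u.2 - 1)*v2 = 1 + (w.1*w.2 - 1)*u.1 then (1:ℕ) else 0)
          = (if (w.1*w.2 - 1)*v1 = 1 + w.1*(u.1*u.2 - 1) then (1:ℕ) else 0)
            * (if (u.1*u.2 - 1)*v2 = 1 + (w.1*w.2 - 1)*u.1 then (1:ℕ) else 0) := by
        intro v1 v2
        by_cases hA : (w.1*w.2 - 1)*v1 = 1 + w.1*(u.1*u.2 - 1) <;>
          by_cases hB : (u.1*u.2 - 1)*v2 = 1 + (w.1*w.2 - 1)*u.1 <;> simp [hA, hB]
      simp only [split]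
      rw [← Finset.sum_mul_sum, sum_solve, sum_solve, ← hq]
    rw [Finset.sum_congr rfl (fun u _ => step u)]
    rfl
  rw [Finset.sum_congr rfl (fun w _ => inner w), Fintype.sum_prod_type,
    Finset.sum_congr rfl (fun a _ => rowsum (F := F) a), ← hq,
    ← Finset.add_sum_erase _ _ (mem_univ (0:F)), if_pos rfl]
  have h1mem : (1:F) ∈ univ.erase (0:F) := mem_erase.mpr ⟨one_ne_zero, mem_univ _⟩
  rw [← Finset.add_sum_erase _ _ h1mem]
  rw [if_neg one_ne_zero, if_pos rfl]
  have hrest : ∀ b ∈ (univ.erase (0:F)).erase 1,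
      (if b = 0 then q * (q^2+1)
        else ((q - 1) * (q^2+1) + q * (if b = 1 then 2*q - 1 else q - 1)))
      = (q - 1) * (q^2+1) + q * (q - 1) := by
    intro b hb
    obtain ⟨hb1, hb0⟩ : b ≠ 1 ∧ b ≠ 0 := by
      simp only [mem_erase] at hb
      exact ⟨hb.1, hb.2.1⟩
    rw [if_neg hb0, if_neg hb1]
  rw [Finset.sum_congr rfl hrest, Finset.sum_const, smul_eq_mul,
    Finset.card_erase_of_mem h1mem, Finset.card_erase_of_mem (mem_univ _), Finset.card_univ, ← hq]
  have h2q : 2 ≤ q := Fintype.one_lt_card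
  obtain ⟨r, hr⟩ : ∃ r, q = r + 2 := ⟨q - 2, by omega⟩
  have e1 : q - 1 = r + 1 := by omega
  have e3 : 2*q - 1 = 2*r + 3 := by omega
  rw [e1, e3, hr]
  simp only [Nat.add_sub_cancel]
  ring
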